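/- Matching an unmatched pair increases similarity (Theorem 1, third condition, made precise): let m, n, l satisfy l < m and l < n, let 0 ≤ λ_k ≤ 1 for all k < l, ξ_k > 0 for all k < m, η_k > 0 for all k < n, and let 0 ≤ μ ≤ 1. Define λ⁺ : Fin (l+1) → ℝ by λ⁺_k = λ_k for k < l and λ⁺_l = μ (the previously unmatched words with index l now form a similar visual word pair with similarity μ). Then F(m, n, l+1, λ⁺, ξ, η) ≥ F(m, n, l, λ, ξ, η): increasing the number of similar visual word pairs does not decrease the similarity. -/

import Mathlib

open Finset

/-- Extend a weight vector on `Fin m` to `ℕ`, zero outside. -/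
noncomputable def extW {m : ℕ} (ξ : Fin m → ℝ) (k : ℕ) : ℝ :=
  if h : k < m then ξ ⟨k, h⟩ else 0

/-- The image similarity measurement of Zhang et al. (Eq. 2). -/
noncomputable def F (m n l : ℕ) (lam : Fin l → ℝ) (ξ : Fin m → ℝ) (η : Fin n → ℝ) : ℝ :=
  (∑ k : Fin l, lam k * extW ξ k * extW η k) /
    (Real.sqrt ((∑ k : Fin m, ξ k) * (∑ k : Fin n, η k)) *
      Real.sqrt ((∑ k : Fin l, (lam k) ^ 2 * extW ξ k * extW η k) +
        (∑ k ∈ Finset.Ico l m, extW ξ k) * (∑ k ∈ Finset.Ico l n, extW η k)))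

lemma extW_nonneg {m : ℕ} (ξ : Fin m → ℝ) (h : ∀ k, 0 ≤ ξ k) (k : ℕ) :
    0 ≤ extW ξ k := by
  unfold extW; split
  · exact h _
  · exact le_refl 0

theorem F_mono_add_pair (m n l : ℕ) (hlm : l < m) (hln : l < n)
    (lam : Fin l → ℝ) (ξ : Fin m → ℝ) (η : Fin n → ℝ)
    (hlam0 : ∀ k, 0 ≤ lam k) (hlam1 : ∀ k, lam k ≤ 1)
    (hξ : ∀ k, 0 < ξ k) (hη : ∀ k, 0 < η k)
    (μ : ℝ) (hμ0 : 0 ≤ μ) (hμ1 : μ ≤ 1)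
    (lamp : Fin (l + 1) → ℝ)
    (hlamp : ∀ k : Fin l, lamp k.castSucc = lam k) (hlampl : lamp (Fin.last l) = μ) :
    F m n l lam ξ η ≤ F m n (l + 1) lamp ξ η := by
  have hxm : extW ξ l = ξ ⟨l, hlm⟩ := by simp [extW, hlm]
  have hyn : extW η l = η ⟨l, hln⟩ := by simp [extW, hln]
  set x := ξ ⟨l, hlm⟩ with hxdef
  set y := η ⟨l, hln⟩ with hydef
  have hξ0 : ∀ k, 0 ≤ extW ξ k := extW_nonneg ξ (fun k => (hξ k).le)
  have hη0 : ∀ k, 0 ≤ extW η k := extW_nonneg η (fun k => (hη k).le)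
  set S := ∑ k : Fin l, lam k * extW ξ k * extW η k with hSdef
  set T := ∑ k : Fin l, (lam k) ^ 2 * extW ξ k * extW η k with hTdef
  set A := (∑ k : Fin m, ξ k) * (∑ k : Fin n, η k) with hAdef
  set P := ∑ k ∈ Finset.Ico (l+1) m, extW ξ k with hPdef
  set Q := ∑ k ∈ Finset.Ico (l+1) n, extW η k with hQdef
  have hF1 : F m n l lam ξ η
      = S / (Real.sqrt A * Real.sqrt (T + (x + P) * (y + Q))) := by
    unfold F
    rw [Finset.sum_eq_sum_Ico_succ_bot hlm, Finset.sum_eq_sum_Ico_succ_bot hln, hxm, hyn]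
  have hF2 : F m n (l+1) lamp ξ η
      = (S + μ * x * y) / (Real.sqrt A * Real.sqrt ((T + μ^2 * x * y) + P * Q)) := by
    unfold F
    rw [Fin.sum_univ_castSucc (f := fun k : Fin (l+1) => lamp k * extW ξ k * extW η k),
        Fin.sum_univ_castSucc (f := fun k : Fin (l+1) => (lamp k)^2 * extW ξ k * extW η k)]
    simp only [Fin.coe_castSucc, Fin.val_last, hlamp, hlampl, hxm, hyn]
    rfl
  rw [hF1, hF2]
  have hS : 0 ≤ S := Finset.sum_nonneg fun k _ =>
    mul_nonneg (mul_nonneg (hlam0 k) (hξ0 k)) (hη0 k)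
  have hT : 0 ≤ T := Finset.sum_nonneg fun k _ =>
    mul_nonneg (mul_nonneg (sq_nonneg _) (hξ0 k)) (hη0 k)
  have hP : 0 ≤ P := Finset.sum_nonneg fun k _ => hξ0 k
  have hQ : 0 ≤ Q := Finset.sum_nonneg fun k _ => hη0 k
  have hx : 0 < x := hξ _
  have hy : 0 < y := hη _
  have hA : 0 < A := mul_pos (Finset.sum_pos (fun k _ => hξ k) ⟨⟨l, hlm⟩, Finset.mem_univ _⟩)
    (Finset.sum_pos (fun k _ => hη k) ⟨⟨l, hln⟩, Finset.mem_univ _⟩)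
  have hB' : 0 ≤ (T + μ^2 * x * y) + P * Q := by positivity
  have hμ2 : μ ^ 2 ≤ 1 := by nlinarith
  have hBB : (T + μ^2 * x * y) + P * Q ≤ T + (x + P) * (y + Q) := by
    nlinarith [mul_nonneg (by nlinarith : (0:ℝ) ≤ 1 - μ ^ 2) (mul_pos hx hy).le,
      mul_nonneg hx.le hQ, mul_nonneg hP hy.le]
  rcases eq_or_lt_of_le hB' with h0 | hpos
  · -- degenerate case: new denominator is zero
    have hPQ : 0 ≤ P * Q := mul_nonneg hP hQ
    have hμ2xy : 0 ≤ μ ^ 2 * x * y := mul_nonneg (mul_nonneg (sq_nonneg μ) hx.le) hy.le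
    have hT0 : T = 0 := by linarith
    have hall := (Finset.sum_eq_zero_iff_of_nonneg (fun (k : Fin l) _ =>
      mul_nonneg (mul_nonneg (sq_nonneg (lam k)) (hξ0 k)) (hη0 k))).mp hT0
    have hS0 : S = 0 := by
      rw [hSdef]
      apply Finset.sum_eq_zero
      intro k _
      have hterm := hall k (Finset.mem_univ k)
      have hkm : (k : ℕ) < m := lt_trans k.isLt hlm
      have hkn : (k : ℕ) < n := lt_trans k.isLt hln
      have hxk : 0 < extW ξ k := by simpa [extW, hkm] using hξ ⟨k, hkm⟩
      have hyk : 0 < extW η k := by simpa [extW, hkn] using hη ⟨k, hkn⟩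
      have h2 : lam k ^ 2 = 0 := by
        rcases mul_eq_zero.mp hterm with h | h
        · rcases mul_eq_zero.mp h with h | h
          · exact h
          · exact absurd h (ne_of_gt hxk)
        · exact absurd h (ne_of_gt hyk)
      have : lam k = 0 := pow_eq_zero_iff two_ne_zero |>.mp h2
      simp [this]
    have hz : Real.sqrt ((T + μ^2 * x * y) + P * Q) = 0 := by
      rw [← h0]; exact Real.sqrt_zero
    rw [hS0, hz]
    simp
  · have hsB' : 0 < Real.sqrt ((T + μ^2 * x * y) + P * Q) := Real.sqrt_pos.mpr hpos
    have hsA : 0 < Real.sqrt A := Real.sqrt_pos.mpr hA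
    have hμxy : 0 ≤ μ * x * y := mul_nonneg (mul_nonneg hμ0 hx.le) hy.le
    exact div_le_div₀ (by linarith) (by linarith) (mul_pos hsA hsB')
      (mul_le_mul_of_nonneg_left (Real.sqrt_le_sqrt hBB) hsA.le)
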